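/- Let f : ℝ^d → ℝ^d be continuous, let μ be an f-invariant ergodic Borel probability measure with compact support X, and let U₁, …, U_m be a finite measurable partition of X with μ(U_j) > 0 for every j. For each pair (j,i) let φ_{j→i} : ℝ^d → ℝ^d be measurable with range contained in U_i and φ_{j→i} = f μ-a.e. on U_j ∩ f^{-1}(U_i), and let G be the Markov kernel on X given for y ∈ U_j by G(y) = ∑_{i=1}^m P_{ij} δ_{φ_{j→i}(y)}, where P_{ij} = μ(U_j ∩ f^{-1}(U_i)) / μ(U_j). Then every probability measure μ_δ on X that is stationary for G satisfies μ_δ(U_j) = μ(U_j) for every j = 1, …, m. -/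

import Mathlib

open MeasureTheory

lemma iterate_preimage_measure {α : Type*} [MeasurableSpace α] {f : α → α} (hf : Measurable f)
    {μ : Measure α} (hinv : Measure.map f μ = μ) (n : ℕ) :
    ∀ A : Set α, MeasurableSet A → μ (f^[n] ⁻¹' A) = μ A := by
  induction n with
  | zero => intro A _; simp
  | succ n ih =>
    intro A hA
    have h1 : f^[n+1] ⁻¹' A = f^[n] ⁻¹' (f ⁻¹' A) := by
      rw [Function.iterate_succ']; rfl
    rw [h1, ih _ (hf hA), ← Measure.map_apply hf hA, hinv]

lemma ergodic_reach {α : Type*} [MeasurableSpace α] {f : α → α} (hf : Measurable f)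
    {μ : Measure α} [IsProbabilityMeasure μ] (hinv : Measure.map f μ = μ)
    (herg : ∀ A : Set α, MeasurableSet A → f ⁻¹' A = A → μ A = 0 ∨ μ A = 1)
    {A B : Set α} (hA : MeasurableSet A) (hB : MeasurableSet B)
    (hA0 : 0 < μ A) (hB0 : 0 < μ B) :
    ∃ n : ℕ, 0 < μ (A ∩ f^[n+1] ⁻¹' B) := by
  set D : ℕ → Set α := fun n => ⋃ i : ℕ, f^[n+1+i] ⁻¹' B with hD
  have hDmeas : ∀ n, MeasurableSet (D n) :=
    fun n => MeasurableSet.iUnion fun i => (hf.iterate _) hB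
  have hDanti : Antitone D := by
    apply antitone_nat_of_succ_le
    intro n
    apply Set.iUnion_subset
    intro i
    apply Set.subset_iUnion_of_subset (i+1)
    have : n + 1 + 1 + i = n + 1 + (i + 1) := by omega
    rw [this]
  have hCmeas : MeasurableSet (⋂ n, D n) := MeasurableSet.iInter hDmeas
  have hpre : ∀ n, f ⁻¹' (D n) = D (n+1) := by
    intro n
    simp only [hD, Set.preimage_iUnion]
    apply Set.iUnion_congr
    intro i
    have h1 : f ⁻¹' (f^[n+1+i] ⁻¹' B) = f^[n+1+i+1] ⁻¹' B := by
      rw [Function.iterate_succ]; rfl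
    rw [h1]
    have : n + 1 + i + 1 = n + 1 + 1 + i := by omega
    rw [this]
  have hfC : f ⁻¹' (⋂ n, D n) = ⋂ n, D n := by
    have h2 : f ⁻¹' (⋂ n, D n) = ⋂ n, D (n+1) := by
      rw [Set.preimage_iInter]
      exact Set.iInter_congr hpre
    rw [h2]
    apply Set.Subset.antisymm
    · exact fun x hx => Set.mem_iInter.mpr fun n =>
        hDanti n.le_succ (Set.mem_iInter.mp hx n)
    · exact fun x hx => Set.mem_iInter.mpr fun n => Set.mem_iInter.mp hx (n+1)
  have hmuD : ∀ n, μ B ≤ μ (D n) := by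
    intro n
    calc μ B = μ (f^[n+1+0] ⁻¹' B) := (iterate_preimage_measure hf hinv _ B hB).symm
    _ ≤ μ (D n) := measure_mono (Set.subset_iUnion (fun i => f^[n+1+i] ⁻¹' B) 0)
  have hmuC : μ B ≤ μ (⋂ n, D n) := by
    rw [hDanti.measure_iInter (fun n => (hDmeas n).nullMeasurableSet)
      ⟨0, measure_ne_top μ _⟩]
    exact le_iInf hmuD
  have hC1 : μ (⋂ n, D n) = 1 := by
    rcases herg _ hCmeas hfC with h | h
    · exact absurd (h ▸ lt_of_lt_of_le hB0 hmuC) (lt_irrefl 0)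
    · exact h
  have hCc : μ (⋂ n, D n)ᶜ = 0 := (prob_compl_eq_zero_iff hCmeas).mpr hC1
  have hAC : 0 < μ (A ∩ ⋂ n, D n) := by
    rw [measure_inter_conull hCc]; exact hA0
  have hsub : A ∩ (⋂ n, D n) ⊆ ⋃ i : ℕ, A ∩ f^[i+1] ⁻¹' B := by
    intro x hx
    have hx0 : x ∈ D 0 := (Set.mem_iInter.mp hx.2) 0
    rcases Set.mem_iUnion.mp hx0 with ⟨i, hi⟩
    refine Set.mem_iUnion.mpr ⟨i, hx.1, ?_⟩
    have : 0 + 1 + i = i + 1 := by omega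
    rwa [this] at hi
  by_contra hcon
  push_neg at hcon
  have hz : ∀ i : ℕ, μ (A ∩ f^[i+1] ⁻¹' B) = 0 :=
    fun i => le_antisymm (hcon i) zero_le
  have : μ (A ∩ ⋂ n, D n) = 0 := by
    apply le_antisymm _ zero_le
    calc μ (A ∩ ⋂ n, D n) ≤ μ (⋃ i : ℕ, A ∩ f^[i+1] ⁻¹' B) := measure_mono hsub
    _ ≤ ∑' i : ℕ, μ (A ∩ f^[i+1] ⁻¹' B) := measure_iUnion_le _
    _ = 0 := by simp only [hz, tsum_zero]
  exact absurd (this ▸ hAC) (lt_irrefl 0)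
theorem stationary_measure_cell_masses
    {d : ℕ} (f : EuclideanSpace ℝ (Fin d) → EuclideanSpace ℝ (Fin d))
    (hf : Continuous f)
    (μ : Measure (EuclideanSpace ℝ (Fin d))) [IsProbabilityMeasure μ]
    (hinv : Measure.map f μ = μ)
    (hergodic : ∀ A : Set (EuclideanSpace ℝ (Fin d)), MeasurableSet A → f ⁻¹' A = A →
      μ A = 0 ∨ μ A = 1)
    (X : Set (EuclideanSpace ℝ (Fin d)))
    (hX_supp : X = {x | ∀ V ∈ nhds x, 0 < μ V})
    (hX_cpt : IsCompact X)
    (m : ℕ) (U : Fin m → Set (EuclideanSpace ℝ (Fin d)))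
    (hU_meas : ∀ j, MeasurableSet (U j))
    (hU_disj : Pairwise (Function.onFun Disjoint U))
    (hU_cover : (⋃ j, U j) = X)
    (hU_pos : ∀ j, 0 < μ (U j))
    (P : Fin m → Fin m → ℝ)
    (hP : ∀ i j, P i j = (μ (U j ∩ f ⁻¹' (U i))).toReal / (μ (U j)).toReal)
    (φ : Fin m → Fin m → EuclideanSpace ℝ (Fin d) → EuclideanSpace ℝ (Fin d))
    (hφ_meas : ∀ j i, Measurable (φ j i))
    (hφ_range : ∀ j i, Set.range (φ j i) ⊆ U i)
    (hφ_ae : ∀ j i, ∀ᵐ x ∂(μ.restrict (U j ∩ f ⁻¹' (U i))), φ j i x = f x)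
    -- the cell-index function: `c y = j` whenever `y ∈ U j` :
    (c : EuclideanSpace ℝ (Fin d) → Fin m)
    (hc : ∀ j, ∀ y ∈ U j, c y = j)
    -- the step-skew Markov kernel `G` :
    (G : EuclideanSpace ℝ (Fin d) → Measure (EuclideanSpace ℝ (Fin d)))
    (hG : ∀ y, G y = ∑ i : Fin m, ENNReal.ofReal (P i (c y)) • Measure.dirac (φ (c y) i y))
    -- `μ_δ` : a stationary probability measure of `G`, concentrated on `X` :
    (μδ : Measure (EuclideanSpace ℝ (Fin d))) [IsProbabilityMeasure μδ]
    (hμδ_X : μδ X = 1)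
    (hstat : ∀ A : Set (EuclideanSpace ℝ (Fin d)), MeasurableSet A →
      (∫⁻ y, G y A ∂μδ) = μδ A) :
    ∀ j, μδ (U j) = μ (U j) := by
  intro j
  have hfm : Measurable f := hf.measurable
  have hXmeas : MeasurableSet X := by
    rw [← hU_cover]; exact MeasurableSet.iUnion fun k => hU_meas k
  -- μ gives full mass to its support X
  have hμXc : μ Xᶜ = 0 := by
    have hopen : ∀ x : (Xᶜ : Set (EuclideanSpace ℝ (Fin d))),
        ∃ W : Set (EuclideanSpace ℝ (Fin d)), IsOpen W ∧ (x : EuclideanSpace ℝ (Fin d)) ∈ W ∧ μ W = 0 := by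
      rintro ⟨x, hx⟩
      have : ¬ (∀ V ∈ nhds x, 0 < μ V) := by
        intro h; exact hx (hX_supp ▸ h)
      push_neg at this
      rcases this with ⟨V, hV, hV0⟩
      rcases mem_nhds_iff.mp hV with ⟨W, hWV, hWopen, hxW⟩
      exact ⟨W, hWopen, hxW, le_antisymm (le_trans (measure_mono hWV) hV0) zero_le⟩
    choose W hWopen hWmem hWnull using hopen
    rcases TopologicalSpace.isOpen_iUnion_countable W (fun x => hWopen x) with ⟨T, hTc, hT⟩
    have hsub : Xᶜ ⊆ ⋃ x ∈ T, W x := by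
      intro y hy
      rw [hT]
      exact Set.mem_iUnion.mpr ⟨⟨y, hy⟩, hWmem ⟨y, hy⟩⟩
    apply le_antisymm _ zero_le
    calc μ Xᶜ ≤ μ (⋃ x ∈ T, W x) := measure_mono hsub
    _ = 0 := (measure_biUnion_null_iff hTc).mpr fun x _ => hWnull x
  have hμX : μ X = 1 := (prob_compl_eq_zero_iff hXmeas).mp hμXc
  have hμδXc : μδ Xᶜ = 0 := (prob_compl_eq_zero_iff hXmeas).mpr hμδ_X
  have hPnn : ∀ i k, 0 ≤ P i k := by
    intro i k; rw [hP]
    exact div_nonneg ENNReal.toReal_nonneg ENNReal.toReal_nonneg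
  -- key multiplicative identity
  have hPmul : ∀ i k, ENNReal.ofReal (P i k) * μ (U k) = μ (U k ∩ f ⁻¹' (U i)) := by
    intro i k
    have hb0 : μ (U k) ≠ 0 := (hU_pos k).ne'
    have hbt : μ (U k) ≠ ⊤ := measure_ne_top μ _
    rw [hP, ← ENNReal.toReal_div, ENNReal.ofReal_toReal
      (ne_of_lt (ENNReal.div_lt_top (measure_ne_top μ _) hb0)), ENNReal.div_mul_cancel hb0 hbt]
  -- the disjointness of the intersected family
  have hdisj2 : ∀ i : Fin m, Pairwise (Function.onFun Disjoint (fun k => U k ∩ f ⁻¹' (U i))) :=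
    fun i k l hkl => Set.disjoint_of_subset Set.inter_subset_left Set.inter_subset_left
      (hU_disj hkl)
  -- stationarity equation for μ itself
  have hE2 : ∀ i, μ (U i) = ∑ k, ENNReal.ofReal (P i k) * μ (U k) := by
    intro i
    have h1 : ∑ k, μ (U k ∩ f ⁻¹' (U i)) = μ (⋃ k, U k ∩ f ⁻¹' (U i)) := by
      rw [measure_iUnion (hdisj2 i) (fun k => (hU_meas k).inter (hfm (hU_meas i))),
        tsum_fintype]
    have h2 : (⋃ k, U k ∩ f ⁻¹' (U i)) = f ⁻¹' (U i) ∩ X := by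
      rw [← Set.iUnion_inter, hU_cover, Set.inter_comm]
    simp_rw [hPmul]
    rw [h1, h2, measure_inter_conull hμXc, ← Measure.map_apply hfm (hU_meas i), hinv]
  have hmap : μ (f ⁻¹' (U j)) = μ (U j) := by
    rw [← Measure.map_apply hfm (hU_meas j), hinv]
  -- the kernel mass of each cell
  have hGU : ∀ (i : Fin m) y, G y (U i) = ENNReal.ofReal (P i (c y)) := by
    intro i y
    rw [hG y, Measure.finset_sum_apply]
    rw [Finset.sum_eq_single i]
    · rw [Measure.smul_apply, Measure.dirac_apply' _ (hU_meas i),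
        Set.indicator_of_mem (hφ_range (c y) i (Set.mem_range_self y)) 1]
      simp
    · intro k _ hki
      rw [Measure.smul_apply, Measure.dirac_apply' _ (hU_meas i),
        Set.indicator_of_notMem
          (Set.disjoint_left.mp (hU_disj hki) (hφ_range (c y) k (Set.mem_range_self y))) 1]
      simp
    · intro h; exact absurd (Finset.mem_univ i) h
  -- stationarity equation for μδ
  have hE1 : ∀ i, μδ (U i) = ∑ k, ENNReal.ofReal (P i k) * μδ (U k) := by
    intro i
    rw [← hstat (U i) (hU_meas i)]
    calc (∫⁻ y, G y (U i) ∂μδ) = ∫⁻ y, ENNReal.ofReal (P i (c y)) ∂μδ := by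
          simp_rw [hGU]
    _ = (∫⁻ y in X, ENNReal.ofReal (P i (c y)) ∂μδ)
        + ∫⁻ y in Xᶜ, ENNReal.ofReal (P i (c y)) ∂μδ :=
        (lintegral_add_compl _ hXmeas).symm
    _ = ∫⁻ y in X, ENNReal.ofReal (P i (c y)) ∂μδ := by
        rw [Measure.restrict_eq_zero.mpr hμδXc, lintegral_zero_measure, add_zero]
    _ = ∑ k, ∫⁻ y in U k, ENNReal.ofReal (P i (c y)) ∂μδ := by
        rw [← hU_cover, lintegral_iUnion hU_meas hU_disj, tsum_fintype]
    _ = ∑ k, ENNReal.ofReal (P i k) * μδ (U k) := by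
        apply Finset.sum_congr rfl
        intro k _
        rw [setLIntegral_congr_fun (hU_meas k)
          (fun y hy => by rw [hc k y hy]),
          setLIntegral_const]
  -- real-valued quantities
  set Q : Fin m → ℝ := fun k => (μ (U k)).toReal with hQ
  set V : Fin m → ℝ := fun k => (μδ (U k)).toReal with hV
  have hQpos : ∀ k, 0 < Q k := fun k =>
    ENNReal.toReal_pos (hU_pos k).ne' (measure_ne_top μ _)
  have hVnn : ∀ k, 0 ≤ V k := fun k => ENNReal.toReal_nonneg
  have hsum_cells : ∀ (ν : Measure (EuclideanSpace ℝ (Fin d))), ν X = 1 →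
      ∑ k, (ν (U k)).toReal = 1 := by
    intro ν hν
    have h1 : ν (⋃ k, U k) = ∑ k, ν (U k) := by
      rw [measure_iUnion hU_disj hU_meas, tsum_fintype]
    rw [← ENNReal.toReal_sum (fun k _ => (by
      refine ne_top_of_le_ne_top (hν ▸ ENNReal.one_ne_top) (measure_mono ?_)
      rw [← hU_cover]; exact Set.subset_iUnion U k)), ← h1, hU_cover, hν, ENNReal.toReal_one]
  have hQsum : ∑ k, Q k = 1 := hsum_cells μ hμX
  have hVsum : ∑ k, V k = 1 := hsum_cells μδ hμδ_X
  have hterm_ne_top : ∀ (ν : Measure (EuclideanSpace ℝ (Fin d))) [IsFiniteMeasure ν],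
      ∀ i k, ENNReal.ofReal (P i k) * ν (U k) ≠ ⊤ :=
    fun ν _ i k => ENNReal.mul_ne_top ENNReal.ofReal_ne_top (measure_ne_top ν _)
  have htoRealEq : ∀ (ν : Measure (EuclideanSpace ℝ (Fin d))) [IsFiniteMeasure ν], ∀ i,
      ν (U i) = ∑ k, ENNReal.ofReal (P i k) * ν (U k) →
      (ν (U i)).toReal = ∑ k, P i k * (ν (U k)).toReal := by
    intro ν _ i hEq
    have h := congrArg ENNReal.toReal hEq
    rw [ENNReal.toReal_sum (fun k _ => hterm_ne_top ν i k)] at h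
    rw [h]
    exact Finset.sum_congr rfl fun k _ => by
      rw [ENNReal.toReal_mul, ENNReal.toReal_ofReal (hPnn i k)]
  have hE1R : ∀ i, V i = ∑ k, P i k * V k := fun i => htoRealEq μδ i (hE1 i)
  have hE2R : ∀ i, Q i = ∑ k, P i k * Q k := fun i => htoRealEq μ i (hE2 i)
  -- the minimizing cell
  obtain ⟨j₀, -, hj₀⟩ := Finset.exists_min_image Finset.univ (fun k => V k / Q k)
    ⟨j, Finset.mem_univ j⟩
  set r : ℝ := V j₀ / Q j₀ with hr
  set t : Fin m → ℝ := fun k => V k - r * Q k with ht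
  have ht_nn : ∀ k, 0 ≤ t k := by
    intro k
    have h1 : r ≤ V k / Q k := hj₀ k (Finset.mem_univ k)
    have h2 : r * Q k ≤ V k := (le_div_iff₀ (hQpos k)).mp h1
    simp only [ht]; linarith
  have ht_j₀ : t j₀ = 0 := by
    simp only [ht, hr]
    rw [div_mul_cancel₀ _ (hQpos j₀).ne']
    ring
  have ht_eq : ∀ i, t i = ∑ k, P i k * t k := by
    intro i
    simp only [ht]
    have : ∑ k, P i k * (V k - r * Q k)
        = (∑ k, P i k * V k) - r * ∑ k, P i k * Q k := by
      rw [Finset.mul_sum]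
      rw [← Finset.sum_sub_distrib]
      apply Finset.sum_congr rfl
      intro k _
      ring
    rw [this, ← hE1R i, ← hE2R i]
  have hPpos_iff : ∀ i k, 0 < μ (U k ∩ f ⁻¹' (U i)) → 0 < P i k := by
    intro i k hpos
    rw [hP]
    exact div_pos (ENNReal.toReal_pos hpos.ne' (measure_ne_top μ _))
      (ENNReal.toReal_pos (hU_pos k).ne' (measure_ne_top μ _))
  have hstep : ∀ i, t i = 0 → ∀ k, 0 < μ (U k ∩ f ⁻¹' (U i)) → t k = 0 := by
    intro i hi k hk
    have hsum0 : ∑ k, P i k * t k = 0 := by rw [← ht_eq i, hi]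
    have hterm := (Finset.sum_eq_zero_iff_of_nonneg
      (fun l _ => mul_nonneg (hPnn i l) (ht_nn l))).mp hsum0 k (Finset.mem_univ k)
    rcases mul_eq_zero.mp hterm with h | h
    · exact absurd h (hPpos_iff i k hk).ne'
    · exact h
  -- closure under n-step reachability
  have hreach : ∀ (n : ℕ) (i : Fin m), t i = 0 →
      ∀ k, 0 < μ (U k ∩ f^[n+1] ⁻¹' (U i)) → t k = 0 := by
    intro n
    induction n with
    | zero =>
      intro i hi k hk
      rw [Function.iterate_one] at hk
      exact hstep i hi k hk
    | succ n ih =>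
      intro i hi k hk
      have hsplit : f^[n+2] ⁻¹' (U i) = f^[n+1] ⁻¹' (f ⁻¹' (U i)) := by
        rw [Function.iterate_succ']; rfl
      rw [hsplit] at hk
      have hXc' : μ (f^[n+1] ⁻¹' X)ᶜ = 0 := by
        rw [← Set.preimage_compl, iterate_preimage_measure hfm hinv (n+1) Xᶜ hXmeas.compl]
        exact hμXc
      have hk2 : 0 < μ ((U k ∩ f^[n+1] ⁻¹' (f ⁻¹' (U i))) ∩ f^[n+1] ⁻¹' X) := by
        rw [measure_inter_conull hXc']; exact hk
      have hcover : ((U k ∩ f^[n+1] ⁻¹' (f ⁻¹' (U i))) ∩ f^[n+1] ⁻¹' X)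
          = ⋃ l, (U k ∩ f^[n+1] ⁻¹' (f ⁻¹' (U i))) ∩ f^[n+1] ⁻¹' (U l) := by
        rw [← hU_cover, Set.preimage_iUnion, Set.inter_iUnion]
      rw [hcover] at hk2
      have hex : ∃ l, 0 < μ ((U k ∩ f^[n+1] ⁻¹' (f ⁻¹' (U i))) ∩ f^[n+1] ⁻¹' (U l)) := by
        by_contra hcon
        push_neg at hcon
        have hz : ∀ l, μ ((U k ∩ f^[n+1] ⁻¹' (f ⁻¹' (U i))) ∩ f^[n+1] ⁻¹' (U l)) = 0 :=
          fun l => le_antisymm (hcon l) zero_le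
        have : μ (⋃ l, (U k ∩ f^[n+1] ⁻¹' (f ⁻¹' (U i))) ∩ f^[n+1] ⁻¹' (U l)) = 0 := by
          apply le_antisymm _ zero_le
          calc _ ≤ ∑' l, μ ((U k ∩ f^[n+1] ⁻¹' (f ⁻¹' (U i))) ∩ f^[n+1] ⁻¹' (U l)) :=
              measure_iUnion_le _
          _ = 0 := by simp only [hz, tsum_zero]
        exact absurd (this ▸ hk2) (lt_irrefl 0)
      rcases hex with ⟨l, hl⟩
      -- the last step: U l → U i
      have hsub1 : (U k ∩ f^[n+1] ⁻¹' (f ⁻¹' (U i))) ∩ f^[n+1] ⁻¹' (U l)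
          ⊆ f^[n+1] ⁻¹' (U l ∩ f ⁻¹' (U i)) := by
        intro x hx
        exact Set.mem_preimage.mpr ⟨hx.2, hx.1.2⟩
      have hl_pos : 0 < μ (U l ∩ f ⁻¹' (U i)) := by
        rw [← iterate_preimage_measure hfm hinv (n+1) _
          ((hU_meas l).inter (hfm (hU_meas i)))]
        exact lt_of_lt_of_le hl (measure_mono hsub1)
      have htl : t l = 0 := hstep i hi l hl_pos
      -- the first n+1 steps: U k → U l
      have hsub2 : (U k ∩ f^[n+1] ⁻¹' (f ⁻¹' (U i))) ∩ f^[n+1] ⁻¹' (U l)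
          ⊆ U k ∩ f^[n+1] ⁻¹' (U l) := fun x hx => ⟨hx.1.1, hx.2⟩
      exact ih l htl k (lt_of_lt_of_le hl (measure_mono hsub2))
  -- every cell reaches j₀, so t ≡ 0
  have hall : ∀ k, t k = 0 := by
    intro k
    obtain ⟨n, hn⟩ := ergodic_reach hfm hinv hergodic (hU_meas k) (hU_meas j₀)
      (hU_pos k) (hU_pos j₀)
    exact hreach n j₀ ht_j₀ k hn
  have hVQ : ∀ k, V k = r * Q k := by
    intro k
    have := hall k
    simp only [ht] at this
    linarith
  have hr1 : r = 1 := by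
    have h1 : (1:ℝ) = r * 1 := by
      calc (1:ℝ) = ∑ k, V k := hVsum.symm
      _ = ∑ k, r * Q k := Finset.sum_congr rfl fun k _ => hVQ k
      _ = r * ∑ k, Q k := by rw [Finset.mul_sum]
      _ = r * 1 := by rw [hQsum]
    linarith
  have hfinal : V j = Q j := by rw [hVQ j, hr1, one_mul]
  exact (ENNReal.toReal_eq_toReal_iff' (measure_ne_top μδ _) (measure_ne_top μ _)).mp hfinal
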